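/- Let v be a vertex of a finite directed graph, d ≥ 0, and let γ̃_{d+1}(v) = Σ_{u : dist(v,u)=d} outdeg(u). Then γ̃_{d+1}(v) ≥ γ_{d+1}(v), the number of vertices at distance exactly d+1 from v, and consequently f(v) ≥ f_d(v) − γ̃_{d+1}(v) + (d+2)·(r(v) − n_d(v)). -/

import Mathlib

open Finset

variable {V : Type*}

/-- `steps r n v w` : there is a walk of length `n` from `v` to `w` along relation `r`. -/
def steps (r : V → V → Prop) : ℕ → V → V → Prop
  | 0, v, w => v = w
  | n+1, v, w => ∃ u, r v u ∧ steps r n u w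

/-- `w` is reachable from `v`. -/
def reach (r : V → V → Prop) (v w : V) : Prop := ∃ n, steps r n v w

/-- shortest-path distance (number of edges). -/
noncomputable def ddist (r : V → V → Prop) (v w : V) : ℕ := sInf {n | steps r n v w}

open scoped Classical in
/-- set of vertices reachable from `v`. -/
noncomputable def Rset (r : V → V → Prop) [Fintype V] (v : V) : Finset V :=
  univ.filter (fun w => reach r v w)

/-- number of vertices reachable from `v`. -/
noncomputable def rnum (r : V → V → Prop) [Fintype V] (v : V) : ℕ := (Rset r v).card

/-- farness of `v`. -/
noncomputable def farn (r : V → V → Prop) [Fintype V] (v : V) : ℕ :=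
  ∑ w ∈ Rset r v, ddist r v w

open scoped Classical in
/-- ball of radius `d` around `v`. -/
noncomputable def ball (r : V → V → Prop) [Fintype V] (v : V) (d : ℕ) : Finset V :=
  univ.filter (fun w => reach r v w ∧ ddist r v w ≤ d)

/-- number of vertices at distance at most `d` from `v`. -/
noncomputable def nball (r : V → V → Prop) [Fintype V] (v : V) (d : ℕ) : ℕ := (ball r v d).card

open scoped Classical in
/-- set of vertices at distance exactly `d` from `v`. -/
noncomputable def sphere (r : V → V → Prop) [Fintype V] (v : V) (d : ℕ) : Finset V :=
  univ.filter (fun w => reach r v w ∧ ddist r v w = d)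

/-- number of vertices at distance exactly `d` from `v`. -/
noncomputable def gam (r : V → V → Prop) [Fintype V] (v : V) (d : ℕ) : ℕ := (sphere r v d).card

/-- farness of `v` restricted to distance at most `d`. -/
noncomputable def fd (r : V → V → Prop) [Fintype V] (v : V) (d : ℕ) : ℕ :=
  ∑ w ∈ ball r v d, ddist r v w

open scoped Classical in
/-- out-degree of `u`. -/
noncomputable def outdeg (r : V → V → Prop) [Fintype V] (u : V) : ℕ :=
  (univ.filter (fun w => r u w)).card

/-- `gtil r v d` = upper bound γ̃_{d+1}(v) = Σ_{u : dist(v,u)=d} outdeg(u). -/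
noncomputable def gtil (r : V → V → Prop) [Fintype V] (v : V) (d : ℕ) : ℕ :=
  ∑ u ∈ sphere r v d, outdeg r u

lemma steps_succ' {r : V → V → Prop} {n : ℕ} {v w : V} :
    steps r (n + 1) v w ↔ ∃ u, steps r n v u ∧ r u w := by
  induction n generalizing v with
  | zero =>
    constructor
    · rintro ⟨u, hvu, h⟩; cases h; exact ⟨v, rfl, hvu⟩
    · rintro ⟨u, h, huw⟩; cases h; exact ⟨w, huw, rfl⟩
  | succ n ih =>
    constructor
    · rintro ⟨u, hvu, h⟩
      obtain ⟨x, hx, hxw⟩ := ih.mp h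
      exact ⟨x, ⟨u, hvu, hx⟩, hxw⟩
    · rintro ⟨x, ⟨u, hvu, hux⟩, hxw⟩
      exact ⟨u, hvu, ih.mpr ⟨x, hux, hxw⟩⟩

lemma ddist_steps {r : V → V → Prop} {v w : V} (h : reach r v w) :
    steps r (ddist r v w) v w :=
  Nat.sInf_mem h

lemma ddist_le {r : V → V → Prop} {n : ℕ} {v w : V} (h : steps r n v w) :
    ddist r v w ≤ n :=
  Nat.sInf_le h

theorem farness_lower_bound_outdeg [Fintype V] (r : V → V → Prop) (v : V) (d : ℕ) :
    gam r v (d + 1) ≤ gtil r v d ∧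
    (farn r v : ℤ) ≥
      (fd r v d : ℤ) - (gtil r v d : ℤ)
        + (d + 2) * ((rnum r v : ℤ) - (nball r v d : ℤ)) := by

  classical
  -- Part 1
  have key : ∀ w ∈ sphere r v (d + 1), ∃ u ∈ sphere r v d, r u w := by
    intro w hw
    simp only [sphere, mem_filter, mem_univ, true_and] at hw
    obtain ⟨hreach, hdw⟩ := hw
    have hs : steps r (d + 1) v w := hdw ▸ ddist_steps hreach
    obtain ⟨u, hvu, huw⟩ := steps_succ'.mp hs
    have hru : reach r v u := ⟨d, hvu⟩
    have h1 : ddist r v u ≤ d := ddist_le hvu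
    have h2 : d ≤ ddist r v u := by
      by_contra h
      push_neg at h
      have : steps r (ddist r v u + 1) v w := steps_succ'.mpr ⟨u, ddist_steps hru, huw⟩
      have := ddist_le this
      omega
    refine ⟨u, ?_, huw⟩
    simp only [sphere, mem_filter, mem_univ, true_and]
    exact ⟨hru, le_antisymm h1 h2⟩
  have part1 : gam r v (d + 1) ≤ gtil r v d := by
    have hsub : sphere r v (d + 1) ⊆ (sphere r v d).biUnion
        (fun u => univ.filter (fun w => r u w)) := by
      intro w hw
      obtain ⟨u, hu, huw⟩ := key w hw
      exact mem_biUnion.mpr ⟨u, hu, by simp [huw]⟩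
    calc gam r v (d + 1) ≤ ((sphere r v d).biUnion
        (fun u => univ.filter (fun w => r u w))).card := card_le_card hsub
      _ ≤ ∑ u ∈ sphere r v d, (univ.filter (fun w => r u w)).card := card_biUnion_le
      _ = gtil r v d := rfl
  refine ⟨part1, ?_⟩
  -- Part 2
  set S := Rset r v \ ball r v d with hS
  have hball_sub : ball r v d ⊆ Rset r v := by
    intro w hw
    simp only [ball, mem_filter, mem_univ, true_and] at hw
    simp only [Rset, mem_filter, mem_univ, true_and]
    exact hw.1
  have hsph_sub : sphere r v (d + 1) ⊆ S := by
    intro w hw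
    simp only [sphere, mem_filter, mem_univ, true_and] at hw
    simp only [hS, mem_sdiff, Rset, ball, mem_filter, mem_univ, true_and]
    exact ⟨hw.1, fun h => by have h1 := hw.2; have h2 := h.2; omega⟩
  have h2 : farn r v = fd r v d + ∑ w ∈ S, ddist r v w := by
    rw [farn, fd, ← Finset.sum_sdiff hball_sub]; ring
  have h3 : rnum r v = nball r v d + S.card := by
    rw [rnum, nball, ← Finset.card_sdiff_add_card_eq_card hball_sub]; ring
  have h4 : S.card = gam r v (d + 1) + (S \ sphere r v (d + 1)).card := by
    rw [gam, ← Finset.card_sdiff_add_card_eq_card hsph_sub]; ring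
  have h5 : ∑ w ∈ S, ddist r v w
      = (d + 1) * gam r v (d + 1) + ∑ w ∈ S \ sphere r v (d + 1), ddist r v w := by
    rw [← Finset.sum_sdiff hsph_sub]
    have : ∑ w ∈ sphere r v (d + 1), ddist r v w = (d + 1) * gam r v (d + 1) := by
      rw [gam, Finset.sum_congr rfl (fun w hw => ?_), Finset.sum_const, smul_eq_mul, mul_comm]
      simp only [sphere, mem_filter] at hw
      exact hw.2.2
    omega
  have h7 : (d + 2) * (S \ sphere r v (d + 1)).card
      ≤ ∑ w ∈ S \ sphere r v (d + 1), ddist r v w := by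
    rw [mul_comm, ← smul_eq_mul, ← Finset.sum_const]
    apply Finset.sum_le_sum
    intro w hw
    simp only [mem_sdiff, hS, sphere, ball, Rset, mem_filter, mem_univ, true_and] at hw
    obtain ⟨⟨hr, hle⟩, hne⟩ := hw
    have ha : ddist r v w ≠ d + 1 := fun h => hne ⟨hr, h⟩
    have hb : ¬ ddist r v w ≤ d := fun h => hle ⟨hr, h⟩
    omega
  zify at h2 h3 h4 h5 h7 part1
  nlinarith [h2, h3, h4, h5, h7, part1]
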